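/- Let r ≥ 2 and e ≥ 1 be integers. For an integer j ≥ 0 let N_j denote the number of tuples v : {1,…,r} → ℕ with v(i) ≤ e for all i and v(1) + ⋯ + v(r) = j (equivalently, the coefficient of t^j in (1 + t + ⋯ + t^e)^r). Then N_j < N_{j+1} for every integer j ≥ 0 with 2(j+1) ≤ r·e. (The Hilbert function of ℂ[x₁,…,x_r]/⟨x₁^{e+1},…,x_r^{e+1}⟩ is strictly increasing on the interval [0, ρ/2], where ρ = r·e.) -/

import Mathlib

open Finset

def hsS (e r j : ℕ) : Finset (Fin r → ℕ) :=
  (Fintype.piFinset fun _ : Fin r => Finset.range (e+1)).filter fun v => ∑ i, v i = j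

def hsc (e r j : ℕ) : ℕ := (hsS e r j).card

lemma mem_hsS {e r j : ℕ} {v : Fin r → ℕ} :
    v ∈ hsS e r j ↔ (∀ i, v i ≤ e) ∧ ∑ i, v i = j := by
  simp [hsS, Fintype.mem_piFinset, Nat.lt_succ_iff]

lemma hsc_zero (e j : ℕ) : hsc e 0 j = if j = 0 then 1 else 0 := by
  rcases eq_or_ne j 0 with rfl | h
  · rw [if_pos rfl, hsc, Finset.card_eq_one]
    exact ⟨fun i => i.elim0, by ext v; simp [mem_hsS, funext_iff, Fin.forall_fin_zero_pi]⟩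
  · rw [if_neg h, hsc, Finset.card_eq_zero]
    ext v
    simp only [mem_hsS, Finset.notMem_empty, iff_false, not_and]
    intro _; simpa using (Ne.symm h)

lemma hsc_succ (e s j : ℕ) :
    hsc e (s+1) j = ∑ m ∈ range (j+1), if j ≤ e + m then hsc e s m else 0 := by
  rw [hsc, Finset.card_eq_sum_card_fiberwise
    (f := fun v : Fin (s+1) → ℕ => ∑ i, Fin.tail v i) (t := range (j+1))]
  · refine Finset.sum_congr rfl fun m hm => ?_
    rw [Finset.mem_range, Nat.lt_succ_iff] at hm
    by_cases hem : j ≤ e + m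
    · rw [if_pos hem, hsc]
      refine Finset.card_nbij' (fun v => Fin.tail v) (fun w => Fin.cons (j - m) w) ?_ ?_ ?_ ?_
      · intro v hv
        rw [Finset.mem_coe, Finset.mem_filter, mem_hsS] at hv
        obtain ⟨⟨h1, h2⟩, h3⟩ := hv
        exact mem_hsS.2 ⟨fun i => h1 i.succ, h3⟩
      · intro w hw
        rw [Finset.mem_coe, mem_hsS] at hw
        rw [Finset.mem_coe, Finset.mem_filter, mem_hsS]
        refine ⟨⟨fun i => ?_, ?_⟩, ?_⟩
        · refine Fin.cases ?_ ?_ i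
          · simpa using by omega
          · intro k; simpa using hw.1 k
        · rw [Fin.sum_univ_succ]
          simp only [Fin.cons_zero]
          have : ∀ k : Fin s, Fin.cons (α := fun _ => ℕ) (j - m) w k.succ = w k := fun k => rfl
          rw [Finset.sum_congr rfl fun k _ => this k, hw.2]
          omega
        · have : Fin.tail (Fin.cons (α := fun _ => ℕ) (j - m) w) = w := Fin.tail_cons _ _
          rw [this, hw.2]
      · intro v hv
        rw [Finset.mem_coe, Finset.mem_filter, mem_hsS] at hv
        have h0 : v 0 = j - m := by
          have := hv.1.2
          rw [Fin.sum_univ_succ] at this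
          have ht : ∑ i, Fin.tail v i = m := hv.2
          have : v 0 + m = j := by rw [← ht]; exact this
          omega
        rw [← h0]
        exact Fin.cons_self_tail v
      · intro w hw
        exact Fin.tail_cons _ _
    · rw [if_neg hem]
      rw [Finset.card_eq_zero]
      ext v
      simp only [Finset.mem_filter, mem_hsS, Finset.notMem_empty, iff_false]
      rintro ⟨⟨h1, h2⟩, h3⟩
      rw [Fin.sum_univ_succ] at h2
      have : ∑ i : Fin s, v i.succ = m := h3
      have := h1 0
      omega
  · intro v hv
    rw [Finset.mem_coe, mem_hsS] at hv
    rw [Finset.mem_coe, Finset.mem_range, Nat.lt_succ_iff]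
    have := hv.2
    rw [Fin.sum_univ_succ] at this
    have : ∑ i : Fin s, v i.succ ≤ j := by omega
    exact this

lemma hsc_symm (e r j : ℕ) (hj : j ≤ r * e) : hsc e r j = hsc e r (r * e - j) := by
  have key : ∀ {a b : ℕ}, a + b = r * e →
      ∀ v ∈ hsS e r a, (fun i => e - v i) ∈ hsS e r b := by
    intro a b hab v hv
    rw [mem_hsS] at hv ⊢
    refine ⟨fun i => Nat.sub_le _ _, ?_⟩
    have : ∑ i, (e - v i) + ∑ i, v i = r * e := by
      rw [← Finset.sum_add_distrib]
      have : ∀ i : Fin r, (e - v i) + v i = e := fun i => Nat.sub_add_cancel (hv.1 i)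
      rw [Finset.sum_congr rfl fun i _ => this i, Finset.sum_const, Finset.card_univ,
        Fintype.card_fin, smul_eq_mul]
    omega
  have hab : j + (r * e - j) = r * e := by omega
  have hba : (r * e - j) + j = r * e := by omega
  refine Finset.card_nbij' (fun v i => e - v i) (fun v i => e - v i)
    (key hab) (key hba) ?_ ?_
  · intro v hv
    rw [Finset.mem_coe, mem_hsS] at hv
    funext i
    exact Nat.sub_sub_self (hv.1 i)
  · intro v hv
    rw [Finset.mem_coe, mem_hsS] at hv
    funext i
    exact Nat.sub_sub_self (hv.1 i)

lemma hsc_pos (e : ℕ) : ∀ r j, j ≤ r * e → 0 < hsc e r j := by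
  intro r
  induction r with
  | zero =>
    intro j hj
    have hj0 : j = 0 := by omega
    subst hj0
    simp [hsc_zero]
  | succ s ih =>
    intro j hj
    rw [hsc_succ]
    set m := j - min e j with hm
    have hm1 : m ∈ range (j+1) := by rw [Finset.mem_range]; omega
    have hm2 : j ≤ e + m := by omega
    have hm3 : m ≤ s * e := by
      rcases le_or_gt j e with h | h
      · have : m = 0 := by omega
        simp [this]
      · have : m = j - e := by omega
        have := hj
        rw [Nat.succ_mul] at this
        omega
    calc 0 < hsc e s m := ih m hm3
      _ = if j ≤ e + m then hsc e s m else 0 := by rw [if_pos hm2]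
      _ ≤ _ := Finset.single_le_sum (f := fun m => if j ≤ e + m then hsc e s m else 0)
          (fun i _ => by positivity) hm1

/-- The key difference identity. -/
lemma hsc_diff (e s j : ℕ) :
    hsc e (s+1) j + hsc e s (j+1)
      = hsc e (s+1) (j+1) + (if e ≤ j then hsc e s (j - e) else 0) := by
  rw [hsc_succ e s j, hsc_succ e s (j+1)]
  set a := hsc e s with ha
  set f := fun m => if j ≤ e + m then a m else 0 with hf
  set g := fun m => if j + 1 ≤ e + m then a m else 0 with hg
  have hgj : g (j+1) = a (j+1) := if_pos (by omega)
  rw [Finset.sum_range_succ g (j+1), hgj]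
  have key : ∑ m ∈ range (j+1), f m
      = ∑ m ∈ range (j+1), g m + (if e ≤ j then a (j - e) else 0) := by
    rcases le_or_gt e j with hle | hlt
    · rw [if_pos hle]
      set m0 := j - e with hm0
      have hm0mem : m0 ∈ range (j+1) := by rw [Finset.mem_range]; omega
      rw [← Finset.add_sum_erase _ f hm0mem, ← Finset.add_sum_erase _ g hm0mem]
      have hfm0 : f m0 = a m0 := if_pos (by omega)
      have hgm0 : g m0 = 0 := if_neg (by omega)
      have herase : ∑ m ∈ (range (j+1)).erase m0, f m
          = ∑ m ∈ (range (j+1)).erase m0, g m := by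
        refine Finset.sum_congr rfl fun m hm => ?_
        have hne : m ≠ m0 := Finset.ne_of_mem_erase hm
        have hmem : m ∈ range (j+1) := Finset.mem_of_mem_erase hm
        rw [Finset.mem_range] at hmem
        by_cases h : j ≤ e + m
        · rw [hf, hg]
          simp only
          rw [if_pos h, if_pos (by omega)]
        · rw [hf, hg]
          simp only
          rw [if_neg h, if_neg (by omega)]
      rw [hfm0, hgm0, herase]
      ring
    · rw [if_neg (by omega)]
      rw [add_zero]
      refine Finset.sum_congr rfl fun m hm => ?_
      rw [hf, hg]
      simp only
      rw [if_pos (by omega), if_pos (by omega)]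
  rw [key]
  ring

/-- Weak monotonicity up to the middle. -/
lemma hsc_weak (e : ℕ) : ∀ s m, 2 * m + 1 ≤ s * e → hsc e s m ≤ hsc e s (m + 1) := by
  intro s
  induction s with
  | zero => intro m hm; omega
  | succ s ih =>
    -- first, a "between" comparison for level s
    have between : ∀ m n, m ≤ n → m + n ≤ s * e → hsc e s m ≤ hsc e s n := by
      have aux : ∀ d m, 2 * (m + d) ≤ s * e → hsc e s m ≤ hsc e s (m + d) := by
        intro d
        induction d with
        | zero => intro m _; exact le_refl _
        | succ d ihd =>
          intro m hm
          have h1 : hsc e s m ≤ hsc e s (m + d) := ihd m (by omega)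
          have h2 : hsc e s (m + d) ≤ hsc e s (m + d + 1) := ih (m + d) (by omega)
          exact le_trans h1 h2
      intro m n hmn hsum
      rcases le_or_gt (2 * n) (s * e) with h | h
      · have := aux (n - m) m (by omega)
        have hh : m + (n - m) = n := by omega
        rwa [hh] at this
      · have hn : n ≤ s * e := by omega
        have hsymm : hsc e s n = hsc e s (s * e - n) := hsc_symm e s n hn
        rw [hsymm]
        have := aux (s * e - n - m) m (by omega)
        have hh : m + (s * e - n - m) = s * e - n := by omega
        rwa [hh] at this
    intro j hj
    have hid := hsc_diff e s j
    have hT : (if e ≤ j then hsc e s (j - e) else 0) ≤ hsc e s (j + 1) := by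
      rcases le_or_gt e j with hle | hlt
      · rw [if_pos hle]
        refine between (j - e) (j + 1) (by omega) ?_
        have hse : (s+1) * e = s * e + e := by ring
        omega
      · rw [if_neg (by omega)]
        exact Nat.zero_le _
    have h3 : hsc e (s+1) j + hsc e s (j+1) ≤ hsc e (s+1) (j+1) + hsc e s (j+1) := by
      rw [hid]; exact Nat.add_le_add_left hT _
    exact Nat.le_of_add_le_add_right h3

/-- Strict monotonicity below the middle, for `r ≥ 2`, `e ≥ 1`. -/
lemma hsc_strict (e : ℕ) (he : 1 ≤ e) :
    ∀ r, 2 ≤ r → ∀ j, 2 * (j + 1) ≤ r * e → hsc e r j < hsc e r (j + 1) := by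
  intro r
  induction r with
  | zero => omega
  | succ s ih =>
    intro hr j hj
    have hs : 1 ≤ s := by omega
    have hid := hsc_diff e s j
    have hT : (if e ≤ j then hsc e s (j - e) else 0) < hsc e s (j + 1) := by
      rcases le_or_gt e j with hle | hlt
      · rw [if_pos hle]
        rcases eq_or_lt_of_le hs with hs1 | hs2
        · exfalso
          rw [← hs1, Nat.succ_mul, one_mul] at hj
          omega
        · have hse : (s+1) * e = s * e + e := by ring
          have h1 : hsc e s (j - e) < hsc e s (j - e + 1) :=
            ih (by omega) (j - e) (by omega)
          have h2 : hsc e s (j - e + 1) ≤ hsc e s (j + 1) := by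
            -- between at level s
            have between : ∀ m n, m ≤ n → m + n ≤ s * e → hsc e s m ≤ hsc e s n := by
              have aux : ∀ d m, 2 * (m + d) ≤ s * e → hsc e s m ≤ hsc e s (m + d) := by
                intro d
                induction d with
                | zero => intro m _; exact le_refl _
                | succ d ihd =>
                  intro m hm
                  have h1 : hsc e s m ≤ hsc e s (m + d) := ihd m (by omega)
                  have h2 : hsc e s (m + d) ≤ hsc e s (m + d + 1) :=
                    hsc_weak e s (m + d) (by omega)
                  exact le_trans h1 h2
              intro m n hmn hsum
              rcases le_or_gt (2 * n) (s * e) with h | h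
              · have := aux (n - m) m (by omega)
                have hh : m + (n - m) = n := by omega
                rwa [hh] at this
              · have hn : n ≤ s * e := by omega
                have hsymm : hsc e s n = hsc e s (s * e - n) := hsc_symm e s n hn
                rw [hsymm]
                have := aux (s * e - n - m) m (by omega)
                have hh : m + (s * e - n - m) = s * e - n := by omega
                rwa [hh] at this
            exact between (j - e + 1) (j + 1) (by omega) (by omega)
          omega
      · rw [if_neg (by omega)]
        refine hsc_pos e s (j + 1) ?_
        calc j + 1 ≤ e := hlt
          _ = 1 * e := (one_mul e).symm
          _ ≤ s * e := Nat.mul_le_mul_right e hs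
    have h3 : hsc e (s+1) j + hsc e s (j+1) < hsc e (s+1) (j+1) + hsc e s (j+1) := by
      rw [hid]; exact Nat.add_lt_add_left hT _
    exact Nat.lt_of_add_lt_add_right h3

/-- The number of tuples `v : Fin r → ℕ` with `v i ≤ e` for all `i` and `∑ v i = j`
(the coefficient of `t^j` in `(1 + t + ⋯ + t^e)^r`) is strictly increasing in `j`
on the interval `[0, r·e/2]`, for `r ≥ 2`, `e ≥ 1`. -/
theorem hilbert_function_strictly_increasing
    (r e : ℕ) (hr : 2 ≤ r) (he : 1 ≤ e)
    (N : ℕ → ℕ)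
    (hN : ∀ j, N j = Nat.card {v : Fin r → ℕ // (∀ i, v i ≤ e) ∧ ∑ i, v i = j})
    (j : ℕ) (hj : 2 * (j + 1) ≤ r * e) :
    N j < N (j + 1) := by
  have hNc : ∀ j, N j = hsc e r j := by
    intro j
    rw [hN j, hsc, ← Nat.card_eq_finsetCard]
    exact Nat.card_congr (Equiv.subtypeEquivRight fun v => mem_hsS.symm)
  rw [hNc j, hNc (j+1)]
  exact hsc_strict e he r hr j hj
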